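/- arXiv:2407.20854 — 2 statements merged into one kernel-verified Lean document; each statement's English description precedes it below -/
import Mathlib

section
/- Every nontrivial irreducible complex character of a finite group of odd order is not real-valued (Burnside). Equivalently, if G has odd order and χ ∈ Irr(G) satisfies χ = χ̄, then χ is the trivial character. -/
noncomputable section

open CategoryTheory LinearMap Module

lemma aux_simple {G : Type} [Group G] {V : Type} [AddCommGroup V] [Module ℂ V]
    [FiniteDimensional ℂ V] [Nontrivial V] (ρ : Representation ℂ G V)
    (hirr : ∀ U : Submodule ℂ V, (∀ g : G, ∀ v ∈ U, ρ g v ∈ U) → U = ⊥ ∨ U = ⊤) :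
    Simple (FDRep.of ρ) := by
  constructor
  intro Y f hm
  constructor
  · intro hiso h0
    obtain ⟨v, hv⟩ := exists_ne (0 : V)
    apply hv
    have h1 : inv f ≫ f = 𝟙 (FDRep.of ρ) := IsIso.inv_hom_id f
    have h2 := congrArg (fun φ : FDRep.of ρ ⟶ FDRep.of ρ => φ.hom v) h1
    simp only [h0] at h2
    exact h2.symm.trans rfl
  · intro hne
    haveI := hm
    have hinj : Function.Injective f.hom := by
      let F := Action.forget (FGModuleCat ℂ) (MonCat.of G) ⋙
        forget₂ (FGModuleCat ℂ) (ModuleCat ℂ)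
      haveI : Mono (F.map f) := F.map_mono f
      exact (ModuleCat.mono_iff_injective (F.map f)).1 this
    set U : Submodule ℂ V := LinearMap.range f.hom.hom.hom with hU
    have hUinv : ∀ g : G, ∀ v ∈ U, ρ g v ∈ U := by
      rintro g _ ⟨y, rfl⟩
      exact ⟨Y.ρ g y, congrArg (fun φ => φ.hom.hom y) (f.comm g)⟩
    rcases hirr U hUinv with h | h
    · exfalso
      apply hne
      have : f.hom.hom.hom = 0 := LinearMap.range_eq_bot.1 h
      ext y
      exact congrArg (fun φ : Y.V →ₗ[ℂ] V => φ y) this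
    · have hsurj : Function.Surjective f.hom := by
        intro v
        have : v ∈ U := h ▸ Submodule.mem_top
        exact this
      have : IsIso ((forget₂ (FGModuleCat ℂ) (ModuleCat ℂ)).map f.hom) := by
        haveI : Mono ((forget₂ (FGModuleCat ℂ) (ModuleCat ℂ)).map f.hom) :=
          (ModuleCat.mono_iff_injective _).2 hinj
        haveI : Epi ((forget₂ (FGModuleCat ℂ) (ModuleCat ℂ)).map f.hom) :=
          (ModuleCat.epi_iff_surjective _).2 hsurj
        exact isIso_of_mono_of_epi _
      haveI : IsIso f.hom := isIso_of_reflects_iso f.hom (forget₂ (FGModuleCat ℂ) (ModuleCat ℂ))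
      exact Action.isIso_of_hom_isIso f

lemma aux_trace_comm {V : Type} [AddCommGroup V] [Module ℂ V] [FiniteDimensional ℂ V]
    (A B : V →ₗ[ℂ] V) :
    LinearMap.trace ℂ _ ((TensorProduct.comm ℂ V V).toLinearMap ∘ₗ TensorProduct.map A B)
      = LinearMap.trace ℂ V (A ∘ₗ B) := by
  classical
  let b := Module.finBasis ℂ V
  rw [LinearMap.trace_eq_matrix_trace ℂ (b.tensorProduct b),
      LinearMap.trace_eq_matrix_trace ℂ b]
  rw [LinearMap.toMatrix_comp b b b]
  simp only [Matrix.trace, Matrix.diag, Matrix.mul_apply, LinearMap.toMatrix_apply,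
    Module.Basis.tensorProduct_apply, LinearMap.comp_apply, LinearEquiv.coe_coe,
    TensorProduct.map_tmul, TensorProduct.comm_tmul, Basis.tensorProduct_repr_tmul_apply,
    Fintype.sum_prod_type, smul_eq_mul]
  rw [Finset.sum_comm]

lemma aux_subC (U : Submodule ℂ ℂ) : U = ⊥ ∨ U = ⊤ := by
  rcases eq_or_ne U ⊥ with h | h
  · exact Or.inl h
  · right
    obtain ⟨x, hxU, hx0⟩ := Submodule.exists_mem_ne_zero_of_ne_bot h
    rw [Submodule.eq_top_iff']
    intro y
    have : y = (y * x⁻¹) • x := by field_simp; rw [smul_eq_mul, div_mul_cancel₀ _ hx0]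
    rw [this]
    exact U.smul_mem _ hxU

lemma aux_dual_hirr {G : Type} [Group G] {V : Type} [AddCommGroup V] [Module ℂ V]
    [FiniteDimensional ℂ V] (ρ : Representation ℂ G V)
    (hirr : ∀ U : Submodule ℂ V, (∀ g : G, ∀ v ∈ U, ρ g v ∈ U) → U = ⊥ ∨ U = ⊤) :
    ∀ U : Submodule ℂ (Module.Dual ℂ V),
      (∀ g : G, ∀ φ ∈ U, ρ.dual g φ ∈ U) → U = ⊥ ∨ U = ⊤ := by
  intro U hU
  have hinv : ∀ g : G, ∀ v ∈ U.dualCoannihilator, ρ g v ∈ U.dualCoannihilator := by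
    intro g v hv
    rw [Submodule.mem_dualCoannihilator] at hv ⊢
    intro φ hφ
    have h1 : ρ.dual g⁻¹ φ ∈ U := hU g⁻¹ φ hφ
    have h2 := hv _ h1
    simpa [Representation.dual_apply, Module.Dual.transpose] using h2
  have hdim := Subspace.finrank_add_finrank_dualCoannihilator_eq U
  rcases hirr _ hinv with h | h
  · right
    rw [h, finrank_bot, add_zero] at hdim
    exact Submodule.eq_top_of_finrank_eq (by rw [hdim, Subspace.dual_finrank_eq])
  · left
    rw [h, finrank_top] at hdim
    have : finrank ℂ U = 0 := by
      have h2 : finrank ℂ (Module.Dual ℂ V) = finrank ℂ V := Subspace.dual_finrank_eq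
      omega
    exact Submodule.finrank_eq_zero.1 this

/-- Burnside: every nontrivial irreducible complex character of a finite group of odd
order is not real-valued. Equivalently, if the character `χ` of an irreducible complex
representation of a group `G` of odd order is real-valued, then `χ` is the trivial
character. -/
theorem stmt_3 (G : Type) [Group G] [Finite G] (hodd : Odd (Nat.card G))
    (V : Type) [AddCommGroup V] [Module ℂ V] [FiniteDimensional ℂ V] [Nontrivial V]
    (ρ : Representation ℂ G V)
    (hirr : ∀ U : Submodule ℂ V, (∀ g : G, ∀ v ∈ U, ρ g v ∈ U) → U = ⊥ ∨ U = ⊤)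
    (χ : G → ℂ) (hχ : ∀ g, χ g = LinearMap.trace ℂ V (ρ g))
    (hreal : ∀ g, (starRingEnd ℂ) (χ g) = χ g) :
    ∀ g, χ g = 1 := by
  classical
  cases nonempty_fintype G
  have hn0 : ((Fintype.card G : ℂ)) ≠ 0 := Nat.cast_ne_zero.2 Fintype.card_ne_zero
  letI : Invertible ((Fintype.card G : ℂ)) := invertibleOfNonzero hn0
  letI : Fintype G := ‹Fintype G›
  letI : Invertible ((Nat.card G : ℂ)) := invertibleOfNonzero (by rw [Nat.card_eq_fintype_card]; exact hn0)
  haveI hsimp : Simple (FDRep.of ρ) := aux_simple ρ hirr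
  have hχW : ∀ g, (FDRep.of ρ).character g = χ g := fun g => (hχ g).symm
  -- the trivial representation
  set T : FDRep ℂ G := FDRep.of (Representation.trivial ℂ (G := G) (V := ℂ)) with hT
  haveI : Simple T := aux_simple _ (fun U _ => aux_subC U)
  have hTchar : ∀ g : G, T.character g = 1 := by
    intro g
    have h1 : T.ρ g = LinearMap.id := rfl
    simp [FDRep.character, h1, trace_id]
    show finrank ℂ ℂ = 1
    exact finrank_self ℂ
  -- real-valuedness
  have hre : ∀ g, ((χ g).re : ℂ) = χ g := fun g => Complex.conj_eq_iff_re.1 (hreal g)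
  have hχ1 : χ 1 = (finrank ℂ V : ℂ) := by
    rw [hχ 1, map_one, trace_one]
  by_cases hiso : Nonempty ((FDRep.of ρ) ≅ T)
  · intro g
    obtain ⟨i⟩ := hiso
    have := congrFun (FDRep.char_iso i) g
    rw [hTchar g] at this
    rw [← hχW g]
    exact this
  exfalso
  -- orthogonality with the trivial representation
  have horth1 : ⅟(Fintype.card G : ℂ) • ∑ g : G, (FDRep.of ρ).character g * T.character g⁻¹
      = if Nonempty ((FDRep.of ρ) ≅ T) then (1 : ℂ) else (0 : ℂ) :=
    by have h := FDRep.char_orthonormal (k := ℂ) (G := G) (FDRep.of ρ) T; rw [invOf_eq_inv, smul_eq_mul, ← Nat.card_eq_fintype_card]; convert h using 2 <;> simp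
  rw [if_neg hiso] at horth1
  have hsum0 : ∑ g : G, χ g = 0 := by
    have h2 : ∑ g : G, (FDRep.of ρ).character g * T.character g⁻¹ = 0 := by
      have h3 := congrArg (fun z => (Fintype.card G : ℂ) • z) horth1
      simpa [smul_smul, mul_invOf_self] using h3
    rw [← h2]
    refine Finset.sum_congr rfl fun g _ => ?_
    rw [hTchar g⁻¹, mul_one, hχW g]
  -- orthogonality with the dual representation
  haveI : Nontrivial (Module.Dual ℂ V) := by
    apply nontrivial_of_finrank_pos (R := ℂ)
    rw [Subspace.dual_finrank_eq]
    exact finrank_pos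
  haveI : Simple (FDRep.of (Representation.dual ρ)) :=
    aux_simple _ (aux_dual_hirr ρ hirr)
  have horth2 : ⅟(Fintype.card G : ℂ) • ∑ g : G, (FDRep.of ρ).character g *
        (FDRep.of (Representation.dual ρ)).character g⁻¹
      = if Nonempty ((FDRep.of ρ) ≅ FDRep.of (Representation.dual ρ)) then (1 : ℂ)
        else (0 : ℂ) :=
    by have h := FDRep.char_orthonormal (k := ℂ) (G := G) (FDRep.of ρ) (FDRep.of (Representation.dual ρ)); rw [invOf_eq_inv, smul_eq_mul, ← Nat.card_eq_fintype_card]; convert h using 2 <;> simp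
  have hdchar : ∀ g : G, (FDRep.of (Representation.dual ρ)).character g⁻¹ = χ g := by
    intro g
    have h : (FDRep.of (Representation.dual ρ)).character g⁻¹
        = (FDRep.of ρ).character g⁻¹⁻¹ := FDRep.char_dual (FDRep.of ρ) g⁻¹
    rw [inv_inv] at h
    rw [h, hχW]
  have hsq : ∑ g : G, χ g * χ g = (Fintype.card G : ℂ) := by
    have hLHS : ∑ g : G, (FDRep.of ρ).character g *
        (FDRep.of (Representation.dual ρ)).character g⁻¹ = ∑ g : G, χ g * χ g :=
      Finset.sum_congr rfl fun g _ => by rw [hdchar g, hχW g]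
    have hne : ∑ g : G, χ g * χ g ≠ 0 := by
      have hcast : ∑ g : G, χ g * χ g = ((∑ g : G, (χ g).re * (χ g).re : ℝ) : ℂ) := by
        push_cast
        exact Finset.sum_congr rfl fun g _ => by rw [hre g]
      rw [hcast, Complex.ofReal_ne_zero]
      intro h0
      have hz := (Finset.sum_eq_zero_iff_of_nonneg
        (fun g _ => mul_self_nonneg ((χ g).re))).1 h0 1 (Finset.mem_univ 1)
      have hz1 : (χ 1).re = 0 := mul_self_eq_zero.1 hz
      have hz2 : χ 1 = 0 := by rw [← hre 1, hz1, Complex.ofReal_zero]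
      rw [hχ1] at hz2
      exact (Nat.cast_ne_zero (R := ℂ)).2 finrank_pos.ne' hz2
    by_cases hd : Nonempty ((FDRep.of ρ) ≅ FDRep.of (Representation.dual ρ))
    · rw [if_pos hd, hLHS] at horth2
      have h3 := congrArg (fun z => (Fintype.card G : ℂ) • z) horth2
      simpa [smul_smul, mul_invOf_self] using h3
    · exfalso
      rw [if_neg hd, hLHS] at horth2
      apply hne
      have h3 := congrArg (fun z => (Fintype.card G : ℂ) • z) horth2
      simpa [smul_smul, mul_invOf_self] using h3
  -- the averaging projection on V ⊗ V
  have hproj := Representation.isProj_averageMap (Representation.tprod ρ ρ)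
  have he_exp : Representation.averageMap (Representation.tprod ρ ρ)
      = ⅟(Fintype.card G : ℂ) • ∑ g : G, TensorProduct.map (ρ g) (ρ g) := by
    rw [Representation.averageMap, GroupAlgebra.average]
    simp only [map_smul, map_sum, MonoidAlgebra.of_apply, Representation.asAlgebraHom_single,
      one_smul, Representation.tprod_apply]
  have htre : LinearMap.trace ℂ _ (Representation.averageMap (Representation.tprod ρ ρ)) = 1 := by
    rw [he_exp, map_smul, map_sum]
    have h4 : ∀ g : G, LinearMap.trace ℂ _ (TensorProduct.map (ρ g) (ρ g)) = χ g * χ g := by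
      intro g
      rw [LinearMap.trace_tensorProduct' (ρ g) (ρ g), hχ g]
    rw [Finset.sum_congr rfl fun g _ => h4 g, hsq, smul_eq_mul, invOf_mul_self]
  have hfin : finrank ℂ (Representation.invariants (Representation.tprod ρ ρ)) = 1 := by
    have h5 := hproj.trace
    rw [htre] at h5
    exact_mod_cast h5.symm
  obtain ⟨v, hv0, hvspan⟩ := finrank_eq_one_iff'.1 hfin
  have hu0 : (v : TensorProduct ℂ V V) ≠ 0 := fun h => hv0 (Subtype.ext h)
  have hτσ' : ∀ g : G, (TensorProduct.comm ℂ V V).toLinearMap ∘ₗ (Representation.tprod ρ ρ) g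
      = (Representation.tprod ρ ρ) g ∘ₗ (TensorProduct.comm ℂ V V).toLinearMap := by
    intro g
    apply TensorProduct.ext'
    intro x y
    simp [Representation.tprod_apply, TensorProduct.map_tmul, TensorProduct.comm_tmul]
  have hτσ : ∀ (g : G) (x : TensorProduct ℂ V V),
      (TensorProduct.comm ℂ V V).toLinearMap ((Representation.tprod ρ ρ) g x)
        = (Representation.tprod ρ ρ) g ((TensorProduct.comm ℂ V V).toLinearMap x) :=
    fun g x => congrArg (fun φ : TensorProduct ℂ V V →ₗ[ℂ] TensorProduct ℂ V V => φ x) (hτσ' g)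
  have hττ' : (TensorProduct.comm ℂ V V).toLinearMap ∘ₗ (TensorProduct.comm ℂ V V).toLinearMap
      = LinearMap.id := by
    apply TensorProduct.ext'
    intro x y
    simp [TensorProduct.comm_tmul]
  have hττ : ∀ x : TensorProduct ℂ V V,
      (TensorProduct.comm ℂ V V).toLinearMap ((TensorProduct.comm ℂ V V).toLinearMap x) = x :=
    fun x => congrArg (fun φ : TensorProduct ℂ V V →ₗ[ℂ] TensorProduct ℂ V V => φ x) hττ'
  have hUτ : ∀ x ∈ (Representation.tprod ρ ρ).invariants,
      (TensorProduct.comm ℂ V V).toLinearMap x ∈ (Representation.tprod ρ ρ).invariants := by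
    intro x hx
    rw [Representation.mem_invariants] at hx ⊢
    intro g
    rw [← hτσ g x, hx g]
  have hfU : ∀ x : TensorProduct ℂ V V,
      (TensorProduct.comm ℂ V V).toLinearMap
        (Representation.averageMap (Representation.tprod ρ ρ) x)
        ∈ (Representation.tprod ρ ρ).invariants :=
    fun x => hUτ _ (hproj.map_mem x)
  have heu : Representation.averageMap (Representation.tprod ρ ρ) (v : TensorProduct ℂ V V)
      = (v : TensorProduct ℂ V V) := hproj.map_id _ v.2
  obtain ⟨c, hc⟩ := hvspan ⟨(TensorProduct.comm ℂ V V).toLinearMap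
    (Representation.averageMap (Representation.tprod ρ ρ) (v : TensorProduct ℂ V V)),
    hfU (v : TensorProduct ℂ V V)⟩
  have hcu : c • (v : TensorProduct ℂ V V)
      = (TensorProduct.comm ℂ V V).toLinearMap (v : TensorProduct ℂ V V) := by
    have h := congrArg Subtype.val hc
    rw [Submodule.coe_smul] at h
    have h' : c • (v : TensorProduct ℂ V V) = (TensorProduct.comm ℂ V V).toLinearMap
        (Representation.averageMap (Representation.tprod ρ ρ) (v : TensorProduct ℂ V V)) := h
    rw [heu] at h'
    exact h'
  have hc2 : c * c = 1 := by
    have hA : (TensorProduct.comm ℂ V V).toLinearMap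
        (Representation.averageMap (Representation.tprod ρ ρ)
          ((TensorProduct.comm ℂ V V).toLinearMap
            (Representation.averageMap (Representation.tprod ρ ρ) (v : TensorProduct ℂ V V))))
        = (v : TensorProduct ℂ V V) := by
      rw [hproj.map_id _ (hfU _), hττ, heu]
    have hB : (TensorProduct.comm ℂ V V).toLinearMap
        (Representation.averageMap (Representation.tprod ρ ρ)
          ((TensorProduct.comm ℂ V V).toLinearMap
            (Representation.averageMap (Representation.tprod ρ ρ) (v : TensorProduct ℂ V V))))
        = (c * c) • (v : TensorProduct ℂ V V) := by
      rw [heu, ← hcu, map_smul, heu, map_smul, ← hcu, smul_smul]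
    have h8 : (c * c) • (v : TensorProduct ℂ V V) = (1 : ℂ) • (v : TensorProduct ℂ V V) := by
      rw [one_smul, ← hB, hA]
    exact smul_left_injective ℂ hu0 h8
  have hfc : (TensorProduct.comm ℂ V V).toLinearMap ∘ₗ
      Representation.averageMap (Representation.tprod ρ ρ)
      = c • Representation.averageMap (Representation.tprod ρ ρ) := by
    apply LinearMap.ext
    intro x
    obtain ⟨t, ht⟩ := hvspan ⟨Representation.averageMap (Representation.tprod ρ ρ) x,
      hproj.map_mem x⟩
    have ht' : t • (v : TensorProduct ℂ V V)
        = Representation.averageMap (Representation.tprod ρ ρ) x := by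
      have h := congrArg Subtype.val ht
      rw [Submodule.coe_smul] at h
      exact h
    rw [LinearMap.comp_apply, LinearMap.smul_apply, ← ht', map_smul, ← hcu, smul_smul,
      smul_smul, mul_comm]
  have htrf : LinearMap.trace ℂ _ ((TensorProduct.comm ℂ V V).toLinearMap ∘ₗ
      Representation.averageMap (Representation.tprod ρ ρ)) = c := by
    rw [hfc, map_smul, htre, smul_eq_mul, mul_one]
  have htrf0 : LinearMap.trace ℂ _ ((TensorProduct.comm ℂ V V).toLinearMap ∘ₗ
      Representation.averageMap (Representation.tprod ρ ρ)) = 0 := by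
    have h9 : (TensorProduct.comm ℂ V V).toLinearMap ∘ₗ
        Representation.averageMap (Representation.tprod ρ ρ)
        = ⅟(Fintype.card G : ℂ) • ∑ g : G,
            (TensorProduct.comm ℂ V V).toLinearMap ∘ₗ TensorProduct.map (ρ g) (ρ g) := by
      rw [he_exp]
      simp only [← Module.End.mul_eq_comp, Finset.mul_sum, mul_smul_comm]
    rw [h9, map_smul, map_sum]
    have h10 : ∀ g : G, LinearMap.trace ℂ _
        ((TensorProduct.comm ℂ V V).toLinearMap ∘ₗ TensorProduct.map (ρ g) (ρ g))
        = χ (g * g) := by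
      intro g
      rw [aux_trace_comm (ρ g) (ρ g), ← Module.End.mul_eq_comp, ← map_mul, ← hχ (g * g)]
    rw [Finset.sum_congr rfl fun g _ => h10 g]
    have hcop : (Nat.card G).Coprime 2 := hodd.coprime_two_right
    have h11 : ∑ g : G, χ (g * g) = ∑ g : G, χ g := by
      have h12 := Equiv.sum_comp (powCoprime hcop) χ
      rw [← h12]
      refine Finset.sum_congr rfl fun g _ => ?_
      rw [powCoprime_apply, pow_two]
    rw [h11, hsum0, smul_zero]
  rw [htrf] at htrf0
  rw [htrf0, mul_zero] at hc2
  exact zero_ne_one hc2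
end
end

section
/- Let H be a group of order 24 isomorphic to SL₂(3) acting faithfully on a finite vector space V over 𝔽_p (p odd) of even dimension n. Suppose each of the 4 Sylow 3-subgroups of H has fixed-point space of dimension at most n/2, and pairwise these fixed spaces intersect trivially. If pⁿ − 4·p^{⌊n/2⌋} − 21 > 0, then H has at least two regular orbits on V. -/
open Module

/-! Auxiliary decidable facts about `SL₂(𝔽₃)`. -/

abbrev SL23 := Matrix.SpecialLinearGroup (Fin 2) (ZMod 3)

instance : DecidableEq SL23 := fun a b =>
  @decidable_of_iff _ _ (Matrix.SpecialLinearGroup.ext_iff a b).symm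
    (@Fintype.decidableForallFintype _ _ (fun i => @Fintype.decidableForallFintype _ _ (fun j => ZMod.decidableEq 3 (a.1 i j) (b.1 i j)) _) _)

def zsl : SL23 := ⟨!![(-1 : ZMod 3), 0; 0, -1], by decide⟩

theorem zsl_sq : zsl * zsl = 1 := by decide
theorem zsl_ne_one : zsl ≠ 1 := by decide
theorem zsl_central : ∀ g : SL23, g * zsl = zsl * g := by decide
theorem sl_invol : ∀ g : SL23, g * g = 1 → g = 1 ∨ g = zsl := by decide
theorem sl_comm : ∃ a b : SL23, a * b * a⁻¹ * b⁻¹ = zsl := by decide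
theorem sl_primepow : ∀ g : SL23, g ≠ 1 → ∃ m : Fin 4, g ^ (m : ℕ) ≠ 1 ∧
    (g ^ (m : ℕ) * g ^ (m : ℕ) = 1 ∨ g ^ (m : ℕ) * g ^ (m : ℕ) * g ^ (m : ℕ) = 1) := by decide

/-! Auxiliary constructions. -/

/-- The stabilizer of a vector as a subgroup. -/
def fixSub {p : ℕ} {H V : Type} [Group H] [AddCommGroup V] [Module (ZMod p) V]
    (ρ : H →* (V →ₗ[ZMod p] V)ˣ) (v : V) : Subgroup H where
  carrier := {h | (ρ h).val v = v}
  one_mem' := by simp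
  mul_mem' := by
    intro a b ha hb
    simp only [Set.mem_setOf_eq] at *
    rw [map_mul, Units.val_mul, Module.End.mul_apply, hb, ha]
  inv_mem' := by
    intro a ha
    simp only [Set.mem_setOf_eq] at *
    nth_rewrite 1 [← ha]
    rw [← Module.End.mul_apply, ← Units.val_mul, ← map_mul, inv_mul_cancel, map_one,
      Units.val_one, Module.End.one_apply]

/-- The fixed space of an endomorphism as a submodule. -/
def fixMod {p : ℕ} {V : Type} [AddCommGroup V] [Module (ZMod p) V]
    (f : V →ₗ[ZMod p] V) : Submodule (ZMod p) V where
  carrier := {v | f v = v}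
  add_mem' := by
    intro a b ha hb
    simp only [Set.mem_setOf_eq] at *
    rw [map_add, ha, hb]
  zero_mem' := by simp
  smul_mem' := by
    intro c a ha
    simp only [Set.mem_setOf_eq] at *
    rw [map_smul, ha]

/-- The `(-1)`-eigenspace of an endomorphism as a submodule. -/
def negMod {p : ℕ} {V : Type} [AddCommGroup V] [Module (ZMod p) V]
    (f : V →ₗ[ZMod p] V) : Submodule (ZMod p) V where
  carrier := {v | f v = -v}
  add_mem' := by
    intro a b ha hb
    simp only [Set.mem_setOf_eq] at *
    rw [map_add, ha, hb, neg_add]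
  zero_mem' := by simp
  smul_mem' := by
    intro c a ha
    simp only [Set.mem_setOf_eq] at *
    rw [map_smul, ha, smul_neg]

lemma ncard_biUnion_le' {V ι : Type*} [Finite V] (s : Finset ι) (f : ι → Set V) :
    (⋃ i ∈ s, f i).ncard ≤ ∑ i ∈ s, (f i).ncard := by
  classical
  induction s using Finset.induction_on with
  | empty => simp
  | @insert a s ha ih =>
    rw [Finset.set_biUnion_insert, Finset.sum_insert ha]
    exact (Set.ncard_union_le _ _).trans (by omega)

lemma dvd8_mod3 {N : ℕ} (h1 : N ∣ 8) (h2 : N % 3 = 1 % 3) : N ≤ 4 := by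
  have hle : N ≤ 8 := Nat.le_of_dvd (by norm_num) h1
  interval_cases N <;> revert h1 h2 <;> decide

lemma arith_aux {p n : ℕ} (hp3 : 3 ≤ p) (hneven : Even n)
    (h : 4 * p ^ (n / 2) + 21 < p ^ n) :
    p ^ (n - 2) + 4 * p ^ (n / 2) + 25 ≤ p ^ n := by
  obtain ⟨m, hm⟩ := hneven
  subst hm
  have hdiv : (m + m) / 2 = m := by omega
  rw [hdiv] at h ⊢
  match m with
  | 0 => simp at h
  | 1 =>
    have h1 : p ^ (1 + 1) = p * p := by ring
    have h2 : p ^ 1 = p := pow_one p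
    rw [h1, h2] at h ⊢
    simp only [Nat.sub_self, pow_zero]
    have hp8 : 8 ≤ p := by nlinarith
    nlinarith
  | (k + 2) =>
    set t := p ^ (k + 1) with ht
    have hpt : p ≤ t := Nat.le_self_pow (by omega) p
    have ht3 : 3 ≤ t := le_trans hp3 hpt
    have e1 : p ^ (k + 2 + (k + 2) - 2) = t * t := by
      rw [ht, ← pow_add]; congr 1; omega
    have e2 : p ^ (k + 2) = t * p := by
      rw [ht, ← pow_succ]
    have e3 : p ^ (k + 2 + (k + 2)) = (t * p) * (t * p) := by
      rw [← e2, ← pow_add]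
    rw [e2, e3] at h
    rw [e1, e2, e3]
    have ha : 3 * t ≤ t * p := by nlinarith
    have hb : (3 * t) * (3 * t) ≤ (t * p) * (t * p) := Nat.mul_le_mul ha ha
    have hc : 4 * (t * p) ≤ 4 * (t * t) := by nlinarith
    have hd : 9 ≤ t * t := Nat.mul_le_mul ht3 ht3
    nlinarith [hb, hc, hd]

/-- Let `H ≅ SL₂(3)` (of order 24) act faithfully and linearly on a finite vector space
`V` over `𝔽_p` (`p` odd prime) of even dimension `n`, in such a way that each Sylow
3-subgroup fixes at most `p^(n/2)` vectors (a subspace of dimension at most `n/2`) and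
the fixed spaces of distinct Sylow 3-subgroups intersect trivially. If
`p^n - 4 p^(n/2) - 21 > 0`, then `H` has at least two regular orbits on `V`. -/
theorem stmt_10 (H : Type) [Group H] [Finite H] (hcard : Nat.card H = 24)
    (hiso : Nonempty (H ≃* Matrix.SpecialLinearGroup (Fin 2) (ZMod 3)))
    (p : ℕ) (hp : p.Prime) (hpodd : Odd p)
    (V : Type) [AddCommGroup V] [Module (ZMod p) V] [Finite V]
    (n : ℕ) (hn : Module.finrank (ZMod p) V = n) (hneven : Even n)
    (ρ : H →* (V →ₗ[ZMod p] V)ˣ) (hfaith : Function.Injective ρ)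
    (hsylfix : ∀ P : Sylow 3 H,
      Set.ncard {v : V | ∀ h ∈ (P : Subgroup H), (ρ h).val v = v} ≤ p ^ (n / 2))
    (hsylint : ∀ P Q : Sylow 3 H, P ≠ Q →
      {v : V | ∀ h ∈ (P : Subgroup H), (ρ h).val v = v} ∩
        {v : V | ∀ h ∈ (Q : Subgroup H), (ρ h).val v = v} ⊆ {0})
    (harith : 4 * p ^ (n / 2) + 21 < p ^ n) :
    ∃ v w : V, (∀ h : H, (ρ h).val v = v → h = 1) ∧
      (∀ h : H, (ρ h).val w = w → h = 1) ∧
      ∀ h : H, (ρ h).val v ≠ w := by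
  classical
  obtain ⟨e⟩ := hiso
  haveI := Fact.mk hp
  haveI : Fact (Nat.Prime 3) := ⟨by norm_num⟩
  haveI : NeZero p := ⟨hp.pos.ne'⟩
  haveI : Module.Finite (ZMod p) V := Module.finite_iff_finite.mpr ‹Finite V›
  haveI : Fintype V := Fintype.ofFinite V
  have hp3 : 3 ≤ p := by
    have h2 := hp.two_le
    rcases Nat.eq_or_lt_of_le h2 with h | h
    · exfalso; rw [← h] at hpodd; simp [Nat.odd_iff] at hpodd
    · omega
  -- transported group facts
  set z : H := e.symm zsl with hzdef
  have hez : e z = zsl := e.apply_symm_apply zsl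
  have hz2 : z * z = 1 := by
    apply e.injective; rw [map_mul, hez, zsl_sq, map_one]
  have hzne : z ≠ 1 := by
    intro h; apply zsl_ne_one; rw [← hez, h, map_one]
  have hzc : ∀ g : H, g * z = z * g := fun g => by
    apply e.injective; rw [map_mul, map_mul, hez, zsl_central]
  have hinvol : ∀ h : H, h * h = 1 → h = 1 ∨ h = z := by
    intro h hh
    rcases sl_invol (e h) (by rw [← map_mul, hh, map_one]) with h1 | h1
    · left; apply e.injective; rw [h1, map_one]
    · right; apply e.injective; rw [hez, h1]
  have hcommz : ∃ a b : H, a * b * a⁻¹ * b⁻¹ = z := by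
    obtain ⟨a, b, hab⟩ := sl_comm
    refine ⟨e.symm a, e.symm b, ?_⟩
    apply e.injective
    simp only [map_mul, map_inv, MulEquiv.apply_symm_apply, hez]
    exact hab
  have hppow : ∀ h : H, h ≠ 1 → ∃ m : ℕ, h ^ m ≠ 1 ∧
      (h ^ m * h ^ m = 1 ∨ h ^ m * h ^ m * h ^ m = 1) := by
    intro h hh
    obtain ⟨m, hm1, hm2⟩ := sl_primepow (e h)
      (fun hc => hh (e.injective (by rw [hc, map_one])))
    refine ⟨(m : ℕ), fun hc => hm1 (by rw [← map_pow, hc, map_one]), ?_⟩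
    rcases hm2 with h2 | h2
    · left; apply e.injective; rw [map_mul, map_pow, map_one]; exact h2
    · right; apply e.injective; rw [map_mul, map_mul, map_pow, map_one]; exact h2
  -- linear algebra setup
  set f : V →ₗ[ZMod p] V := (ρ z).val with hfdef
  have hmulapp : ∀ (a b : H) (w : V), (ρ (a * b)).val w = (ρ a).val ((ρ b).val w) := by
    intro a b w; rw [map_mul, Units.val_mul, Module.End.mul_apply]
  have hff : ∀ w : V, f (f w) = w := by
    intro w
    rw [hfdef, ← hmulapp, hz2, map_one, Units.val_one, Module.End.one_apply]
  set Kz : Submodule (ZMod p) V := fixMod f with hKzdef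
  set Kn : Submodule (ZMod p) V := negMod f with hKndef
  have hmemKz : ∀ w : V, w ∈ Kz ↔ f w = w := fun _ => Iff.rfl
  have hmemKn : ∀ w : V, w ∈ Kn ↔ f w = -w := fun _ => Iff.rfl
  have h2p : (2 : ZMod p) ≠ 0 := by
    have hnd : ¬ (p ∣ 2) := by
      intro hdvd
      have := Nat.le_of_dvd (by norm_num) hdvd
      omega
    intro hc
    apply hnd
    rw [show ((2 : ZMod p)) = ((2 : ℕ) : ZMod p) by push_cast; ring] at hc
    exact (ZMod.natCast_eq_zero_iff 2 p).mp hc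
  have hnegeq : ∀ x : V, x = -x → x = 0 := by
    intro x hx
    have h2x : (2 : ZMod p) • x = 0 := by
      rw [two_smul]
      nth_rewrite 2 [hx]
      exact add_neg_cancel x
    rcases smul_eq_zero.mp h2x with hc | hx0
    · exact absurd hc h2p
    · exact hx0
  have hKn_ne : Kn ≠ ⊥ := by
    intro hbot
    have hall : ∀ w : V, f w = w := by
      intro w
      have hu : (w - f w) ∈ Kn := by
        rw [hmemKn, map_sub, hff, neg_sub]
      rw [hbot, Submodule.mem_bot] at hu
      exact (sub_eq_zero.mp hu).symm
    apply hzne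
    apply hfaith
    rw [map_one]
    apply Units.ext
    rw [Units.val_one]
    exact LinearMap.ext hall
  -- the (-1)-eigenspace has dimension at least 2
  have hKn2 : 2 ≤ finrank (ZMod p) Kn := by
    by_contra hlt
    push_neg at hlt
    have h1 : finrank (ZMod p) Kn ≤ 1 := by omega
    obtain ⟨x, hx⟩ := finrank_le_one_iff.mp h1
    obtain ⟨y, hyKn, hy0⟩ := Submodule.exists_mem_ne_zero_of_ne_bot hKn_ne
    have hxne : (x : V) ≠ 0 := by
      intro h0
      obtain ⟨c, hc⟩ := hx ⟨y, hyKn⟩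
      apply hy0
      have hcc : c • (x : V) = y := congrArg Subtype.val hc
      rw [h0, smul_zero] at hcc
      exact hcc.symm
    have hmemKng : ∀ g : H, (ρ g).val (x : V) ∈ Kn := by
      intro g
      rw [hmemKn, hfdef, ← hmulapp, ← hzc g, hmulapp]
      have hxKn : f (x : V) = -(x : V) := x.2
      rw [← hfdef, hxKn, map_neg]
    have hsc : ∀ g : H, ∃ c : ZMod p, (ρ g).val (x : V) = c • (x : V) := by
      intro g
      obtain ⟨c, hc⟩ := hx ⟨(ρ g).val (x : V), hmemKng g⟩
      exact ⟨c, (congrArg Subtype.val hc).symm⟩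
    choose c hcs using hsc
    have key : ∀ (g : H) (d : ZMod p) (w : V), w = d • (x : V) →
        (ρ g).val w = (c g * d) • (x : V) := by
      intro g d w hw
      rw [hw, map_smul, hcs g, smul_smul, mul_comm d]
    have hcanc : ∀ d d' : ZMod p, d • (x : V) = d' • (x : V) → d = d' := by
      intro d d' hdd
      have hsub : (d - d') • (x : V) = 0 := by rw [sub_smul, hdd, sub_self]
      rcases smul_eq_zero.mp hsub with h | h
      · exact sub_eq_zero.mp h
      · exact absurd h hxne
    have hinvc : ∀ g : H, c g * c g⁻¹ = 1 := by
      intro g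
      have h0 : (x : V) = (1 : ZMod p) • (x : V) := (one_smul _ _).symm
      have h1 := key g⁻¹ 1 (x : V) h0
      have h2 := key g _ _ h1
      have h3 : (ρ g).val ((ρ g⁻¹).val (x : V)) = (x : V) := by
        rw [← hmulapp, mul_inv_cancel, map_one, Units.val_one, Module.End.one_apply]
      rw [h3] at h2
      have := hcanc 1 (c g * (c g⁻¹ * 1)) (by rw [one_smul]; exact h2)
      calc c g * c g⁻¹ = c g * (c g⁻¹ * 1) := by ring
        _ = 1 := this.symm
    obtain ⟨a, b, hab⟩ := hcommz
    have h0 : (x : V) = (1 : ZMod p) • (x : V) := (one_smul _ _).symm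
    have h1 := key b⁻¹ 1 (x : V) h0
    have h2 := key a⁻¹ _ _ h1
    have h3 := key b _ _ h2
    have h4 := key a _ _ h3
    have hchain : f (x : V) = (c a * (c b * (c a⁻¹ * (c b⁻¹ * 1)))) • (x : V) := by
      rw [hfdef, ← hab, hmulapp, hmulapp, hmulapp]
      exact h4
    have hscal : c a * (c b * (c a⁻¹ * (c b⁻¹ * 1))) = (c a * c a⁻¹) * (c b * c b⁻¹) := by
      ring
    have hfx : f (x : V) = (x : V) := by
      rw [hchain, hscal, hinvc a, hinvc b, one_mul, one_smul]
    have hxKn : f (x : V) = -(x : V) := x.2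
    exact hxne (hnegeq _ (hfx.symm.trans hxKn))
  -- dimension bound on the fixed space of z
  have hdisj : Kz ⊓ Kn = ⊥ := by
    rw [eq_bot_iff]
    intro v hv
    obtain ⟨hv1, hv2⟩ := Submodule.mem_inf.mp hv
    rw [hmemKz] at hv1
    rw [hmemKn] at hv2
    exact Submodule.mem_bot _ |>.mpr (hnegeq v (hv1.symm.trans hv2))
  have hsum := Submodule.finrank_sup_add_finrank_inf_eq Kz Kn
  rw [hdisj, finrank_bot] at hsum
  have hle : finrank (ZMod p) ↥(Kz ⊔ Kn) ≤ n := hn ▸ Submodule.finrank_le _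
  have hKzle : finrank (ZMod p) Kz ≤ n - 2 := by omega
  -- cardinalities
  have hcV : Nat.card V = p ^ n := by
    rw [Nat.card_eq_fintype_card, card_eq_pow_finrank (K := ZMod p), ZMod.card, hn]
  have hKzcard : Set.ncard {v : V | f v = v} ≤ p ^ (n - 2) := by
    have h1 : {v : V | f v = v} = (Kz : Set V) := rfl
    rw [h1, ← Nat.card_coe_set_eq]
    have h2 : Nat.card ↥(Kz : Set V) = Nat.card ↥Kz := rfl
    rw [h2, Nat.card_eq_fintype_card, card_eq_pow_finrank (K := ZMod p) (V := ↥Kz), ZMod.card]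
    exact Nat.pow_le_pow_right hp.pos hKzle
  -- the number of Sylow 3-subgroups is at most 4, and each has order 3
  haveI : Fintype (Sylow 3 H) := Fintype.ofFinite _
  have hfac24 : (24 : ℕ).factorization 3 = 1 := by
    rw [show (24 : ℕ) = 3 * 8 by norm_num, Nat.factorization_mul (by norm_num) (by norm_num)]
    rw [Finsupp.add_apply, Nat.Prime.factorization (by norm_num),
      Nat.factorization_eq_zero_of_not_dvd (by norm_num)]
    simp
  have hcardSylP : ∀ P : Sylow 3 H, Nat.card (P : Subgroup H) = 3 := by
    intro P
    rw [Sylow.card_eq_multiplicity, hcard, hfac24, pow_one]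
  have hSyl4 : Fintype.card (Sylow 3 H) ≤ 4 := by
    obtain ⟨P0⟩ := (inferInstance : Nonempty (Sylow 3 H))
    have hidx : (P0 : Subgroup H).index = 8 := by
      have hmi := Subgroup.card_mul_index (P0 : Subgroup H)
      rw [hcardSylP P0, hcard] at hmi
      omega
    have hdvd : Nat.card (Sylow 3 H) ∣ 8 := by
      rw [← hidx]; exact Sylow.card_dvd_index P0
    have hmod : Nat.card (Sylow 3 H) % 3 = 1 % 3 := card_sylow_modEq_one 3 H
    rw [← Nat.card_eq_fintype_card]
    exact dvd8_mod3 hdvd hmod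
  -- the set of non-regular vectors
  set Fx : Sylow 3 H → Set V := fun P => {v : V | ∀ h ∈ (P : Subgroup H), (ρ h).val v = v}
    with hFxdef
  set Bad : Set V := {v | ∃ h : H, h ≠ 1 ∧ (ρ h).val v = v} with hBaddef
  have hsub : Bad ⊆ {v : V | f v = v} ∪ ⋃ P ∈ (Finset.univ : Finset (Sylow 3 H)), Fx P := by
    rintro v ⟨h, hne, hfix⟩
    obtain ⟨m, hm1, hm2⟩ := hppow h hne
    have hfixm : (ρ (h ^ m)).val v = v :=
      pow_mem (show h ∈ fixSub ρ v from hfix) m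
    rcases hm2 with h2 | h3
    · rcases hinvol _ h2 with h1 | h1
      · exact absurd h1 hm1
      · left
        show f v = v
        rw [hfdef, ← h1]
        exact hfixm
    · right
      set g := h ^ m with hgdef
      have hordg : orderOf g = 3 := by
        have hdvd : orderOf g ∣ 3 := orderOf_dvd_of_pow_eq_one (by
          rw [pow_succ, pow_two]; exact h3)
        rcases (Nat.prime_three).eq_one_or_self_of_dvd _ hdvd with h1 | h1
        · exact absurd (orderOf_eq_one_iff.mp h1) hm1
        · exact h1
      have hpg : IsPGroup 3 (Subgroup.zpowers g) :=
        IsPGroup.of_card (((Nat.card_zpowers g).trans hordg).trans (pow_one 3).symm)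
      obtain ⟨P, hP⟩ := hpg.exists_le_sylow
      have hPeq : Subgroup.zpowers g = (P : Subgroup H) :=
        Subgroup.eq_of_le_of_card_ge hP
          (by rw [Nat.card_zpowers, hordg, hcardSylP P])
      simp only [Set.mem_iUnion]
      refine ⟨P, Finset.mem_univ P, ?_⟩
      intro q hq
      rw [← hPeq] at hq
      obtain ⟨k, hk⟩ := Subgroup.mem_zpowers_iff.mp hq
      rw [← hk]
      exact zpow_mem (show g ∈ fixSub ρ v from hfixm) k
  have hBadcard : Bad.ncard ≤ p ^ (n - 2) + 4 * p ^ (n / 2) := by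
    calc Bad.ncard
        ≤ ({v : V | f v = v} ∪ ⋃ P ∈ (Finset.univ : Finset (Sylow 3 H)), Fx P).ncard :=
          Set.ncard_le_ncard hsub (Set.toFinite _)
      _ ≤ {v : V | f v = v}.ncard
            + (⋃ P ∈ (Finset.univ : Finset (Sylow 3 H)), Fx P).ncard :=
          Set.ncard_union_le _ _
      _ ≤ p ^ (n - 2) + ∑ P ∈ (Finset.univ : Finset (Sylow 3 H)), (Fx P).ncard :=
          add_le_add hKzcard (ncard_biUnion_le' _ _)
      _ ≤ p ^ (n - 2) + 4 * p ^ (n / 2) := by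
          apply Nat.add_le_add_left
          calc ∑ P ∈ (Finset.univ : Finset (Sylow 3 H)), (Fx P).ncard
              ≤ (Finset.univ : Finset (Sylow 3 H)).card * p ^ (n / 2) := by
                rw [← smul_eq_mul]
                exact Finset.sum_le_card_nsmul _ _ _ (fun P _ => hsylfix P)
            _ ≤ 4 * p ^ (n / 2) := by
                apply Nat.mul_le_mul_right
                rw [Finset.card_univ]
                exact hSyl4
  -- the set of regular vectors is large
  set Good : Set V := {v : V | ∀ h : H, (ρ h).val v = v → h = 1} with hGooddef
  have hGoodcompl : Good = Badᶜ := by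
    ext v
    simp only [hGooddef, hBaddef, Set.mem_compl_iff, Set.mem_setOf_eq, not_exists]
    constructor
    · intro hv h ⟨hne, hfix⟩
      exact hne (hv h hfix)
    · intro hv h hfix
      by_contra hne
      exact hv h ⟨hne, hfix⟩
  have hGoodcard : 25 ≤ Good.ncard := by
    have hcompl := Set.ncard_add_ncard_compl Bad
    rw [hcV] at hcompl
    have := arith_aux hp3 hneven harith
    rw [hGoodcompl]
    omega
  -- extract two regular vectors in distinct orbits
  have hGoodne : Good.Nonempty := by
    rw [Set.nonempty_iff_ne_empty]
    intro hemp
    rw [hemp, Set.ncard_empty] at hGoodcard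
    omega
  obtain ⟨v, hv⟩ := hGoodne
  set O : Set V := Set.range (fun h : H => (ρ h).val v) with hOdef
  have hOcard : O.ncard ≤ 24 := by
    rw [hOdef, ← Set.image_univ]
    calc ((fun h : H => (ρ h).val v) '' Set.univ).ncard
        ≤ (Set.univ : Set H).ncard := Set.ncard_image_le (Set.toFinite _)
      _ = Nat.card H := Set.ncard_univ H
      _ = 24 := hcard
  have hnotsub : ¬ (Good ⊆ O) := by
    intro hss
    have := Set.ncard_le_ncard hss (Set.toFinite O)
    omega
  obtain ⟨w, hwG, hwO⟩ := Set.not_subset.mp hnotsub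
  exact ⟨v, w, hv, hwG, fun h hc => hwO ⟨h, hc⟩⟩
end
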